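/- arXiv:2504.12430 — 3 statements merged into one kernel-verified Lean document; each statement's English description precedes it below -/
import Mathlib

section
/- Let b ≥ 1 and let s_1, s_2, ..., s_b be nonnegative reals such that for every j with 1 ≤ j ≤ b we have s_1 ≥ s_j - s_{j+1} + s_{j+2} - ... + (-1)^{b-j} s_b. Then the alternating sum ∑_{i=1}^{b} (-1)^{i+1} s_i / i is at least s_1 / b. -/
private lemma tele_aux (i : ℕ) (hi : 1 ≤ i) :
    ∑ k ∈ Finset.Icc 2 i, (1 : ℝ) / (k * ((k : ℝ) - 1)) = 1 - 1 / i := by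
  induction i with
  | zero => omega
  | succ n ih =>
    rcases Nat.lt_or_ge n 1 with hn | hn
    · interval_cases n
      simp
    · rw [Finset.sum_Icc_succ_top (by omega : 2 ≤ n + 1), ih hn]
      have hn0 : (n : ℝ) ≠ 0 := by positivity
      have hn1 : (n : ℝ) + 1 ≠ 0 := by positivity
      push_cast
      field_simp
      ring_nf
      rw [mul_inv_cancel₀ hn0]
      ring

theorem stmt_8 (b : ℕ) (hb : 1 ≤ b) (s : ℕ → ℝ) (hs : ∀ i ∈ Finset.Icc 1 b, 0 ≤ s i)
    (h : ∀ j ∈ Finset.Icc 1 b, s 1 ≥ ∑ i ∈ Finset.Icc j b, (-1 : ℝ) ^ (i - j) * s i) :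
    ∑ i ∈ Finset.Icc 1 b, (-1 : ℝ) ^ (i + 1) * s i / (i : ℝ) ≥ s 1 / (b : ℝ) := by
  set T : ℕ → ℝ := fun k => ∑ i ∈ Finset.Icc k b, (-1 : ℝ) ^ (i - k) * s i with hT
  have hs1 : 0 ≤ s 1 := hs 1 (Finset.mem_Icc.mpr ⟨le_refl 1, hb⟩)
  have hTle : ∀ k, 1 ≤ k → k ≤ b → T k ≤ s 1 := fun k h1 h2 =>
    h k (Finset.mem_Icc.mpr ⟨h1, h2⟩)
  -- recurrence : T k = s k - T (k+1)
  have hrec : ∀ k, 1 ≤ k → k ≤ b → T k = s k - T (k + 1) := by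
    intro k h1 h2
    have hsplit : T k = (-1 : ℝ) ^ (k - k) * s k
        + ∑ i ∈ Finset.Icc (k + 1) b, (-1 : ℝ) ^ (i - k) * s i := by
      rw [hT]
      simp only
      rw [← Finset.Ico_add_one_right_eq_Icc, Finset.sum_eq_sum_Ico_succ_bot (by omega : k < b + 1),
        Finset.Ico_add_one_right_eq_Icc]
    rw [hsplit]
    have : ∑ i ∈ Finset.Icc (k + 1) b, (-1 : ℝ) ^ (i - k) * s i
        = - ∑ i ∈ Finset.Icc (k + 1) b, (-1 : ℝ) ^ (i - (k + 1)) * s i := by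
      rw [← Finset.sum_neg_distrib]
      apply Finset.sum_congr rfl
      intro i hi
      rw [Finset.mem_Icc] at hi
      have : i - k = (i - (k + 1)) + 1 := by omega
      rw [this, pow_succ]
      ring
    rw [this]
    simp only [hT, Nat.sub_self, pow_zero, one_mul]
    ring
  -- T (k+1) ≤ s 1 for 1 ≤ k ≤ b (including k = b, where T (b+1) = 0)
  have hTle' : ∀ k, 1 ≤ k → k ≤ b → T (k + 1) ≤ s 1 := by
    intro k h1 h2
    rcases Nat.lt_or_ge k b with hk | hk
    · exact hTle (k + 1) (by omega) (by omega)
    · have : T (k + 1) = 0 := by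
        rw [hT]
        simp only
        rw [Finset.Icc_eq_empty (by omega), Finset.sum_empty]
      rw [this]; exact hs1
  -- lower bound : -s 1 ≤ T k
  have hTge : ∀ k, 1 ≤ k → k ≤ b → -s 1 ≤ T k := by
    intro k h1 h2
    rw [hrec k h1 h2]
    have h1' : 0 ≤ s k := hs k (Finset.mem_Icc.mpr ⟨h1, h2⟩)
    have := hTle' k h1 h2
    linarith
  -- Abel-type identity
  have habel : ∑ i ∈ Finset.Icc 1 b, (-1 : ℝ) ^ (i + 1) * s i / (i : ℝ)
      = T 1 + ∑ k ∈ Finset.Icc 2 b, (-1 : ℝ) ^ k * T k / (k * ((k : ℝ) - 1)) := by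
    have hswap : ∑ k ∈ Finset.Icc 2 b, (-1 : ℝ) ^ k * T k / (k * ((k : ℝ) - 1))
        = ∑ i ∈ Finset.Icc 2 b, (-1 : ℝ) ^ i * s i * (1 - 1 / (i : ℝ)) := by
      have : ∀ k ∈ Finset.Icc 2 b, (-1 : ℝ) ^ k * T k / (k * ((k : ℝ) - 1))
          = ∑ i ∈ Finset.Icc k b, (-1 : ℝ) ^ k * ((-1 : ℝ) ^ (i - k) * s i) / (k * ((k : ℝ) - 1)) := by
        intro k hk
        rw [hT]
        simp only
        rw [Finset.mul_sum, Finset.sum_div]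
      rw [Finset.sum_congr rfl this]
      rw [Finset.sum_comm' (t' := Finset.Icc 2 b) (s' := fun i => Finset.Icc 2 i)
        (by intro k i; simp only [Finset.mem_Icc]; omega)]
      apply Finset.sum_congr rfl
      intro i hi
      rw [Finset.mem_Icc] at hi
      have hstep : ∀ k ∈ Finset.Icc 2 i,
          (-1 : ℝ) ^ k * ((-1 : ℝ) ^ (i - k) * s i) / (k * ((k : ℝ) - 1))
          = (-1 : ℝ) ^ i * s i * (1 / (k * ((k : ℝ) - 1))) := by
        intro k hk
        rw [Finset.mem_Icc] at hk
        have : (-1 : ℝ) ^ k * (-1 : ℝ) ^ (i - k) = (-1 : ℝ) ^ i := by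
          rw [← pow_add]
          congr 1
          omega
        field_simp
        rw [this]
        ring
      rw [Finset.sum_congr rfl hstep, ← Finset.mul_sum, tele_aux i (by omega)]
    rw [hswap, hT]
    simp only
    have h1 : ∑ i ∈ Finset.Icc 1 b, (-1 : ℝ) ^ (i - 1) * s i
        = ∑ i ∈ Finset.Icc 1 b, ((-1 : ℝ) ^ (i + 1) * s i / (i : ℝ)
          - (if 2 ≤ i then (-1 : ℝ) ^ i * s i * (1 - 1 / (i : ℝ)) else 0)) := by
      apply Finset.sum_congr rfl
      intro i hi
      rw [Finset.mem_Icc] at hi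
      rcases Nat.lt_or_ge i 2 with h2 | h2
      · interval_cases i
        · omega
        · simp
      · rw [if_pos h2]
        have hp : (-1 : ℝ) ^ (i - 1) = (-1 : ℝ) ^ (i + 1) := by
          have : i + 1 = (i - 1) + 2 := by omega
          rw [this, pow_add]
          simp
        have hp2 : (-1 : ℝ) ^ (i + 1) = -(-1 : ℝ) ^ i := by
          rw [pow_succ]; ring
        have hi0 : (i : ℝ) ≠ 0 := by positivity
        rw [hp, hp2]
        field_simp
        ring
    rw [h1, Finset.sum_sub_distrib]
    have h2 : ∑ i ∈ Finset.Icc 1 b,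
        (if 2 ≤ i then (-1 : ℝ) ^ i * s i * (1 - 1 / (i : ℝ)) else 0)
        = ∑ i ∈ Finset.Icc 2 b, (-1 : ℝ) ^ i * s i * (1 - 1 / (i : ℝ)) := by
      rw [← Finset.sum_filter]
      apply Finset.sum_congr _ (fun _ _ => rfl)
      ext x
      simp only [Finset.mem_filter, Finset.mem_Icc]
      omega
    rw [h2]
    ring
  rw [ge_iff_le, habel]
  -- case b = 1
  rcases Nat.lt_or_ge b 2 with hb2 | hb2
  · interval_cases b
    have : T 1 = s 1 := by
      rw [hrec 1 (by omega) (by omega)]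
      have : T 2 = 0 := by
        rw [hT]; simp
      rw [this]; ring
    rw [this]
    simp
  -- case b ≥ 2
  · have hT1 : T 1 = s 1 - T 2 := hrec 1 (by omega) (by omega)
    have hsplit2 : ∑ k ∈ Finset.Icc 2 b, (-1 : ℝ) ^ k * T k / (k * ((k : ℝ) - 1))
        = T 2 / 2 + ∑ k ∈ Finset.Icc 3 b, (-1 : ℝ) ^ k * T k / (k * ((k : ℝ) - 1)) := by
      rw [← Finset.Ico_add_one_right_eq_Icc, Finset.sum_eq_sum_Ico_succ_bot (by omega : 2 < b + 1),
        Finset.Ico_add_one_right_eq_Icc]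
      norm_num
    have hbound : ∑ k ∈ Finset.Icc 3 b, (-1 : ℝ) ^ k * T k / (k * ((k : ℝ) - 1))
        ≥ ∑ k ∈ Finset.Icc 3 b, (-s 1) / (k * ((k : ℝ) - 1)) := by
      apply Finset.sum_le_sum
      intro k hk
      rw [Finset.mem_Icc] at hk
      have hkpos : (0 : ℝ) < k * ((k : ℝ) - 1) := by
        have : (3 : ℝ) ≤ (k : ℝ) := by exact_mod_cast hk.1
        nlinarith
      have hnum : -s 1 ≤ (-1 : ℝ) ^ k * T k := by
        rcases Nat.even_or_odd k with hpar | hpar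
        · rw [hpar.neg_one_pow, one_mul]
          exact hTge k (by omega) hk.2
        · rw [hpar.neg_one_pow, neg_one_mul, neg_le_neg_iff]
          exact hTle k (by omega) hk.2
      exact (div_le_div_iff_of_pos_right hkpos).mpr hnum
    have htele3 : ∑ k ∈ Finset.Icc 3 b, (1 : ℝ) / (k * ((k : ℝ) - 1)) = 1 / 2 - 1 / b := by
      have h2b := tele_aux b hb
      rw [← Finset.Ico_add_one_right_eq_Icc, Finset.sum_eq_sum_Ico_succ_bot (by omega : 2 < b + 1),
        Finset.Ico_add_one_right_eq_Icc] at h2b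
      norm_num at h2b ⊢
      linarith
    have hsum3 : ∑ k ∈ Finset.Icc 3 b, (-s 1) / (k * ((k : ℝ) - 1))
        = -s 1 * (1 / 2 - 1 / b) := by
      rw [← htele3, Finset.mul_sum]
      apply Finset.sum_congr rfl
      intro k _
      field_simp
    have hT2 : T 2 ≤ s 1 := hTle 2 (by omega) hb2
    rw [hsplit2, hT1]
    rw [hsum3] at hbound
    have hr : -s 1 * (1 / 2 - 1 / (b : ℝ)) = -(s 1) / 2 + s 1 / (b : ℝ) := by ring
    linarith
end

section
/- Let 1 ≤ b < a and n ≥ 1 be integers with vb divisible by a and v ≥ n. Set p = a·C(bv/a, n)/(b·C(v, n)). If m is a positive integer with C(a,b)^v · (1-p)^m < 1, then there exists an n-uniform hypergraph H on v vertices with at most m edges that admits no proper (a:b)-coloring. -/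
open Finset

private lemma myfac_nonneg (n : ℕ) (x : ℝ) :
    0 ≤ ∏ i ∈ Finset.range n, max (x - i) 0 :=
  Finset.prod_nonneg fun _ _ => le_max_right _ _

private lemma myfac_mono (n : ℕ) :
    Monotone (fun x : ℝ => ∏ i ∈ Finset.range n, max (x - i) 0) := by
  intro x y hxy
  exact Finset.prod_le_prod (fun _ _ => le_max_right _ _)
    (fun i _ => max_le_max (by linarith) le_rfl)

private lemma factor_convex (c : ℝ) :
    ConvexOn ℝ Set.univ (fun x : ℝ => max (x - c) 0) := by
  have h1 : ConvexOn ℝ Set.univ (fun x : ℝ => x - c) :=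
    (convexOn_id convex_univ).sub (concaveOn_const c convex_univ)
  simpa [Pi.sup_def] using h1.sup (convexOn_const 0 convex_univ)

private lemma factor_mono (c : ℝ) : Monotone (fun x : ℝ => max (x - c) 0) := by
  intro x y hxy
  exact max_le_max (by linarith) le_rfl

private lemma myfac_convex (n : ℕ) :
    ConvexOn ℝ Set.univ (fun x : ℝ => ∏ i ∈ Finset.range n, max (x - i) 0) := by
  induction n with
  | zero => simpa using convexOn_const (1 : ℝ) convex_univ
  | succ k ih =>
      have h := ih.mul (factor_convex (k : ℝ))
        (fun x _ => myfac_nonneg k x) (fun x _ => le_max_right _ _)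
        (((myfac_mono k).monovary (factor_mono (k : ℝ))).monovaryOn _)
      have : (fun x : ℝ => ∏ i ∈ Finset.range (k + 1), max (x - i) 0) =
          (fun x : ℝ => ∏ i ∈ Finset.range k, max (x - i) 0) *
          (fun x : ℝ => max (x - k) 0) := by
        funext x
        simp [Finset.prod_range_succ]
      rw [this]
      exact h

private lemma myfac_eval (n k : ℕ) :
    (∏ i ∈ Finset.range n, max ((k : ℝ) - i) 0) = (k.descFactorial n : ℝ) := by
  rw [Nat.descFactorial_eq_prod_range, Nat.cast_prod]
  refine Finset.prod_congr rfl fun i _ => ?_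
  rcases le_or_gt i k with h | h
  · rw [Nat.cast_sub h, max_eq_left (by simp [sub_nonneg, Nat.cast_le, h])]
  · rw [Nat.sub_eq_zero_of_le h.le, max_eq_right]
    · simp
    · have : (k : ℝ) ≤ i := by exact_mod_cast h.le
      linarith

noncomputable def Ffun (n : ℕ) : ℝ → ℝ :=
  fun x => (∏ i ∈ Finset.range n, max (x - i) 0) / (n.factorial : ℝ)

private lemma Ffun_eval (n k : ℕ) : Ffun n (k : ℝ) = (k.choose n : ℝ) := by
  unfold Ffun
  rw [myfac_eval, Nat.descFactorial_eq_factorial_mul_choose]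
  have h : (n.factorial : ℝ) ≠ 0 := by positivity
  field_simp
  exact Nat.cast_mul _ _

private lemma Ffun_convex (n : ℕ) : ConvexOn ℝ Set.univ (Ffun n) := by
  unfold Ffun
  have h : (0 : ℝ) ≤ (n.factorial : ℝ)⁻¹ := by positivity
  simpa [div_eq_mul_inv, mul_comm] using (myfac_convex n).smul h

private lemma Ffun_mono (n : ℕ) : Monotone (Ffun n) := by
  intro x y hxy
  unfold Ffun
  gcongr

/-- Convexity bound: the sum of binomial coefficients is at least `a` times the
binomial coefficient of the (floor) average. -/
private lemma convexity_bound (n a : ℕ) (ha : 0 < a) (x : Fin a → ℕ) :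
    (a : ℝ) * (((∑ i, x i) / a).choose n : ℝ) ≤ ∑ i, ((x i).choose n : ℝ) := by
  have haR : (0 : ℝ) < a := by exact_mod_cast ha
  have hJ := (Ffun_convex n).map_sum_le (t := Finset.univ) (w := fun _ : Fin a => (a : ℝ)⁻¹)
    (p := fun i => ((x i : ℕ) : ℝ)) (fun _ _ => by positivity)
    (by simp [Finset.card_univ, mul_comm]; field_simp) (fun _ _ => Set.mem_univ _)
  simp only [smul_eq_mul] at hJ
  have hsum : ∑ i : Fin a, (a : ℝ)⁻¹ * ((x i : ℕ) : ℝ) = (∑ i, ((x i : ℕ) : ℝ)) / a := by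
    rw [Finset.sum_div]
    refine Finset.sum_congr rfl fun i _ => ?_
    rw [div_eq_mul_inv, mul_comm]
  rw [hsum] at hJ
  have hmono : Ffun n ((((∑ i, x i) / a : ℕ)) : ℝ) ≤ Ffun n ((∑ i, ((x i : ℕ) : ℝ)) / a) := by
    apply Ffun_mono
    have : ((∑ i, x i : ℕ) : ℝ) = ∑ i, ((x i : ℕ) : ℝ) := by push_cast; rfl
    rw [← this]
    exact_mod_cast Nat.cast_div_le
  have key : Ffun n ((((∑ i, x i) / a : ℕ)) : ℝ) ≤ ∑ i, (a : ℝ)⁻¹ * Ffun n ((x i : ℕ) : ℝ) :=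
    le_trans hmono hJ
  rw [Ffun_eval] at key
  have key2 : (a : ℝ) * (((∑ i, x i) / a).choose n : ℝ) ≤
      (a : ℝ) * ∑ i, (a : ℝ)⁻¹ * Ffun n ((x i : ℕ) : ℝ) := by
    exact mul_le_mul_of_nonneg_left key haR.le
  refine key2.trans_eq ?_
  rw [Finset.mul_sum]
  refine Finset.sum_congr rfl fun i _ => ?_
  rw [Ffun_eval]
  field_simp

theorem stmt_15 (a b n v : ℕ) (hb : 1 ≤ b) (hba : b < a) (hn : 1 ≤ n)
    (hdvd : a ∣ v * b) (hvn : n ≤ v) (p : ℝ)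
    (hp : p = (a : ℝ) * (((v * b / a).choose n : ℝ)) / ((b : ℝ) * ((v.choose n : ℝ))))
    (m : ℕ) (hm : 0 < m) (hlt : ((a.choose b : ℝ)) ^ v * (1 - p) ^ m < 1) :
    ∃ E : Finset (Finset (Fin v)), (∀ e ∈ E, e.card = n) ∧ E.card ≤ m ∧
      ∀ χ : Fin v → Finset (Fin a), (∀ u, (χ u).card = b) →
        ∃ e ∈ E, ∃ γ : Fin a, ∀ u ∈ e, γ ∈ χ u := by
  have ha : 0 < a := lt_trans (lt_of_lt_of_le Nat.zero_lt_one hb) hba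
  classical
  set 𝒜 : Finset (Finset (Fin v)) := Finset.powersetCard n Finset.univ with h𝒜
  set Bad : (Fin v → Finset (Fin a)) → Finset (Finset (Fin v)) :=
    fun χ => 𝒜.filter (fun e => ∃ γ, ∀ u ∈ e, γ ∈ χ u) with hBad
  set N : ℕ := v.choose n with hNdef
  have hAcard : 𝒜.card = N := by
    rw [h𝒜, Finset.card_powersetCard, Finset.card_univ, Fintype.card_fin]
  have hNpos : 0 < N := Nat.choose_pos hvn
  -- Lemma B: lower bound on the number of bad edges
  have lemB : ∀ χ : Fin v → Finset (Fin a), (∀ u, (χ u).card = b) →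
      (a : ℝ) * (((v * b / a).choose n : ℝ)) ≤ (b : ℝ) * ((Bad χ).card : ℝ) := by
    intro χ hχ
    set x : Fin a → ℕ := fun γ => (Finset.univ.filter (fun u => γ ∈ χ u)).card with hx
    have hxsum : ∑ γ, x γ = v * b := by
      have : ∑ γ, x γ = ∑ γ : Fin a, ∑ u : Fin v, if γ ∈ χ u then 1 else 0 := by
        refine Finset.sum_congr rfl fun γ _ => ?_
        show (Finset.univ.filter (fun u => γ ∈ χ u)).card = _
        rw [Finset.card_filter]
      rw [this, Finset.sum_comm]
      have : ∀ u : Fin v, ∑ γ : Fin a, (if γ ∈ χ u then 1 else 0) = b := by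
        intro u
        rw [← Finset.card_filter]
        simp [Finset.filter_mem_eq_inter, hχ u]
      simp only [this, Finset.sum_const, Finset.card_univ, Fintype.card_fin, smul_eq_mul, mul_one]
    -- each γ's "monochromatic" edge set
    have hsub : ∀ γ : Fin a,
        (Finset.univ.filter (fun u => γ ∈ χ u)).powersetCard n
          = (Bad χ).filter (fun e => e ⊆ Finset.univ.filter (fun u => γ ∈ χ u)) := by
      intro γ
      ext e
      simp only [Finset.mem_powersetCard, Finset.mem_filter, hBad, h𝒜]
      constructor
      · rintro ⟨hsub, hcard⟩
        refine ⟨⟨⟨Finset.subset_univ _, hcard⟩, γ, fun u hu => (Finset.mem_filter.1 (hsub hu)).2⟩,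
          hsub⟩
      · rintro ⟨⟨⟨_, hcard⟩, _⟩, hsub⟩
        exact ⟨hsub, hcard⟩
    have hchoose : ∀ γ : Fin a, (x γ).choose n =
        ((Bad χ).filter (fun e => e ⊆ Finset.univ.filter (fun u => γ ∈ χ u))).card := by
      intro γ
      rw [← hsub γ, Finset.card_powersetCard]
    -- double counting
    have hdouble : ∑ γ, (x γ).choose n ≤ b * (Bad χ).card := by
      have h1 : ∑ γ, (x γ).choose n =
          ∑ e ∈ Bad χ, (Finset.univ.filter
            (fun γ : Fin a => e ⊆ Finset.univ.filter (fun u => γ ∈ χ u))).card := by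
        simp only [hchoose, Finset.card_filter]
        rw [Finset.sum_comm]
      rw [h1]
      have h2 : ∀ e ∈ Bad χ, (Finset.univ.filter
          (fun γ : Fin a => e ⊆ Finset.univ.filter (fun u => γ ∈ χ u))).card ≤ b := by
        intro e he
        have hecard : e.card = n := by
          have := Finset.mem_filter.1 he
          exact (Finset.mem_powersetCard.1 this.1).2
        have hepos : 0 < e.card := by omega
        obtain ⟨u₀, hu₀⟩ := Finset.card_pos.1 hepos
        have : (Finset.univ.filter
            (fun γ : Fin a => e ⊆ Finset.univ.filter (fun u => γ ∈ χ u))) ⊆ χ u₀ := by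
          intro γ hγ
          have := (Finset.mem_filter.1 hγ).2 hu₀
          exact (Finset.mem_filter.1 this).2
        calc _ ≤ (χ u₀).card := Finset.card_le_card this
          _ = b := hχ u₀
      calc ∑ e ∈ Bad χ, (Finset.univ.filter
            (fun γ : Fin a => e ⊆ Finset.univ.filter (fun u => γ ∈ χ u))).card
          ≤ ∑ _e ∈ Bad χ, b := Finset.sum_le_sum h2
        _ = b * (Bad χ).card := by rw [Finset.sum_const, smul_eq_mul, mul_comm]
    have hconv := convexity_bound n a ha x
    rw [hxsum] at hconv
    calc (a : ℝ) * (((v * b / a).choose n : ℝ)) ≤ ∑ γ, ((x γ).choose n : ℝ) := hconv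
      _ = ((∑ γ, (x γ).choose n : ℕ) : ℝ) := by rw [Nat.cast_sum]
      _ ≤ ((b * (Bad χ).card : ℕ) : ℝ) := by exact_mod_cast hdouble
      _ = (b : ℝ) * ((Bad χ).card : ℝ) := by push_cast; ring
  -- valid colorings
  set 𝒞 : Finset (Fin v → Finset (Fin a)) :=
    Finset.univ.filter (fun χ => ∀ u, (χ u).card = b) with h𝒞
  have h𝒞card : 𝒞.card ≤ (a.choose b) ^ v := by
    have hsub : 𝒞 ⊆ Fintype.piFinset (fun _ : Fin v => Finset.powersetCard b Finset.univ) := by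
      intro χ hχ
      rw [Fintype.mem_piFinset]
      intro u
      rw [Finset.mem_powersetCard]
      exact ⟨Finset.subset_univ _, (Finset.mem_filter.1 hχ).2 u⟩
    calc 𝒞.card ≤ _ := Finset.card_le_card hsub
      _ = (a.choose b) ^ v := by
          rw [Fintype.card_piFinset]
          simp [Finset.card_powersetCard, Finset.card_univ]
  -- main claim via counting
  have claim : ∃ f : Fin m → Finset (Fin v), (∀ i, f i ∈ 𝒜) ∧
      ∀ χ ∈ 𝒞, ∃ i, f i ∈ Bad χ := by
    by_contra hcon
    push_neg at hcon
    have hcover : Fintype.piFinset (fun _ : Fin m => 𝒜) ⊆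
        𝒞.biUnion (fun χ => Fintype.piFinset (fun _ : Fin m => 𝒜 \ Bad χ)) := by
      intro f hf
      rw [Fintype.mem_piFinset] at hf
      obtain ⟨χ, hχ𝒞, hχ⟩ := hcon f hf
      rw [Finset.mem_biUnion]
      refine ⟨χ, hχ𝒞, ?_⟩
      rw [Fintype.mem_piFinset]
      intro i
      rw [Finset.mem_sdiff]
      exact ⟨hf i, hχ i⟩
    have hcard1 : (N : ℝ) ^ m ≤ ∑ χ ∈ 𝒞, (((𝒜 \ Bad χ).card : ℝ)) ^ m := by
      have h1 : N ^ m ≤ ∑ χ ∈ 𝒞, ((𝒜 \ Bad χ).card) ^ m := by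
        calc N ^ m = (Fintype.piFinset (fun _ : Fin m => 𝒜)).card := by
              rw [Fintype.card_piFinset]
              simp [hAcard]
          _ ≤ (𝒞.biUnion (fun χ => Fintype.piFinset (fun _ : Fin m => 𝒜 \ Bad χ))).card :=
              Finset.card_le_card hcover
          _ ≤ ∑ χ ∈ 𝒞, (Fintype.piFinset (fun _ : Fin m => 𝒜 \ Bad χ)).card :=
              Finset.card_biUnion_le
          _ = ∑ χ ∈ 𝒞, ((𝒜 \ Bad χ).card) ^ m := by
              refine Finset.sum_congr rfl fun χ _ => ?_
              rw [Fintype.card_piFinset]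
              simp
      exact_mod_cast h1
    have hterm : ∀ χ ∈ 𝒞, (((𝒜 \ Bad χ).card : ℝ)) ^ m ≤ ((1 - p) * N) ^ m := by
      intro χ hχ𝒞
      have hχ : ∀ u, (χ u).card = b := (Finset.mem_filter.1 hχ𝒞).2
      have hBsub : Bad χ ⊆ 𝒜 := Finset.filter_subset _ _
      have hBle : (Bad χ).card ≤ N := hAcard ▸ Finset.card_le_card hBsub
      have hsdiff : (𝒜 \ Bad χ).card = N - (Bad χ).card := by
        rw [Finset.card_sdiff_of_subset hBsub, hAcard]
      have hbR : (0 : ℝ) < b := by exact_mod_cast hb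
      have hNR : (0 : ℝ) < N := by exact_mod_cast hNpos
      have hpN : p * N = (a : ℝ) * (((v * b / a).choose n : ℝ)) / b := by
        rw [hp, hNdef]
        field_simp
        exact mul_div_cancel_right₀ _ (Nat.cast_ne_zero.mpr (Nat.choose_pos hvn).ne')
      have hBbound : p * N ≤ ((Bad χ).card : ℝ) := by
        rw [hpN, div_le_iff₀ hbR]
        have := lemB χ hχ
        linarith [lemB χ hχ]
      have hle : (((𝒜 \ Bad χ).card : ℝ)) ≤ (1 - p) * N := by
        rw [hsdiff]
        have : ((N - (Bad χ).card : ℕ) : ℝ) = (N : ℝ) - ((Bad χ).card : ℝ) := by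
          rw [Nat.cast_sub hBle]
        rw [this]
        nlinarith [hBbound]
      exact pow_le_pow_left₀ (by positivity) hle m
    have hpow0 : (0 : ℝ) ≤ ((1 - p) * N) ^ m := by
      obtain ⟨S, -, hScard⟩ := Finset.exists_subset_card_eq
        (show b ≤ (Finset.univ : Finset (Fin a)).card by simp [Finset.card_univ]; omega)
      have hχ₀ : (fun _ : Fin v => S) ∈ 𝒞 := by
        rw [h𝒞, Finset.mem_filter]
        exact ⟨Finset.mem_univ _, fun _ => hScard⟩
      exact le_trans (by positivity) (hterm _ hχ₀)
    have hfinal : (N : ℝ) ^ m ≤ ((a.choose b : ℝ)) ^ v * ((1 - p) * N) ^ m := by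
      calc (N : ℝ) ^ m ≤ ∑ χ ∈ 𝒞, (((𝒜 \ Bad χ).card : ℝ)) ^ m := hcard1
        _ ≤ ∑ _χ ∈ 𝒞, ((1 - p) * N) ^ m := Finset.sum_le_sum hterm
        _ = (𝒞.card : ℝ) * ((1 - p) * N) ^ m := by rw [Finset.sum_const, nsmul_eq_mul]
        _ ≤ ((a.choose b : ℝ)) ^ v * ((1 - p) * N) ^ m := by
            apply mul_le_mul_of_nonneg_right
            · exact_mod_cast h𝒞card
            · exact hpow0
    have hNmpos : (0 : ℝ) < (N : ℝ) ^ m := by positivity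
    have : ((a.choose b : ℝ)) ^ v * ((1 - p) * N) ^ m =
        (((a.choose b : ℝ)) ^ v * (1 - p) ^ m) * (N : ℝ) ^ m := by rw [mul_pow]; ring
    rw [this] at hfinal
    nlinarith [hfinal, hlt, hNmpos]
  obtain ⟨f, hf𝒜, hfbad⟩ := claim
  refine ⟨Finset.image f Finset.univ, ?_, ?_, ?_⟩
  · intro e he
    obtain ⟨i, _, rfl⟩ := Finset.mem_image.1 he
    exact (Finset.mem_powersetCard.1 (hf𝒜 i)).2
  · calc (Finset.image f Finset.univ).card ≤ Finset.univ.card := Finset.card_image_le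
      _ = m := by simp
  · intro χ hχ
    have hχ𝒞 : χ ∈ 𝒞 := by
      rw [h𝒞, Finset.mem_filter]
      exact ⟨Finset.mem_univ _, hχ⟩
    obtain ⟨i, hi⟩ := hfbad χ hχ𝒞
    obtain ⟨_, γ, hγ⟩ := Finset.mem_filter.1 hi
    exact ⟨f i, Finset.mem_image_of_mem f (Finset.mem_univ i), γ, hγ⟩
end

section
/- Let a', b, n be positive integers with 2 ≤ b < a' and a'·(b/(a'-b+1))^n ≤ 1. Then ∑_{k=1}^{b} k·C(a', k)·∏_{j=1}^{k-1} ((b-j)/(a'-j))^n ≤ e·a'. -/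
theorem stmt_16 (a' b n : ℕ) (hb : 2 ≤ b) (hba : b < a') (hn : 1 ≤ n)
    (hcond : (a' : ℝ) * ((b : ℝ) / ((a' : ℝ) - (b : ℝ) + 1)) ^ n ≤ 1) :
    ∑ k ∈ Finset.Icc 1 b, (k : ℝ) * (a'.choose k : ℝ) *
        ∏ j ∈ Finset.Icc 1 (k - 1), (((b : ℝ) - (j : ℝ)) / ((a' : ℝ) - (j : ℝ))) ^ n
      ≤ Real.exp 1 * (a' : ℝ) := by
  set A : ℝ := (a' : ℝ) with hA
  set B : ℝ := (b : ℝ) with hB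
  have hApos : (0:ℝ) < A := by
    have : 0 < a' := by omega
    rw [hA]; exact_mod_cast this
  have hBA : B + 1 ≤ A := by
    have : ((b+1:ℕ):ℝ) ≤ (a':ℝ) := by exact_mod_cast hba
    push_cast at this
    rw [hA, hB]; linarith
  have hB2 : (2:ℝ) ≤ B := by
    rw [hB]; exact_mod_cast hb
  have hrpos : (0:ℝ) < A - B + 1 := by linarith
  have hrn : (B / (A - B + 1)) ^ n ≤ 1 / A := by
    rw [le_div_iff₀ hApos]; linarith [hcond]
  have hrn0 : (0:ℝ) ≤ (B / (A - B + 1)) ^ n := by positivity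
  have hterm : ∀ k ∈ Finset.Icc 1 b,
      (k : ℝ) * (a'.choose k : ℝ) *
        ∏ j ∈ Finset.Icc 1 (k - 1), ((B - (j : ℝ)) / (A - (j : ℝ))) ^ n
      ≤ A / ((k-1).factorial : ℕ) := by
    intro k hk
    simp only [Finset.mem_Icc] at hk
    obtain ⟨hk1, hkb⟩ := hk
    have hjfacts : ∀ j ∈ Finset.Icc 1 (k-1), (1:ℝ) ≤ (j:ℝ) ∧ (j:ℝ) ≤ B - 1 := by
      intro j hj
      simp only [Finset.mem_Icc] at hj
      constructor
      · exact_mod_cast hj.1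
      · have : j + 1 ≤ b := by omega
        have := (Nat.cast_le (α := ℝ)).2 this
        push_cast at this; linarith
    have hprod : ∏ j ∈ Finset.Icc 1 (k - 1), ((B - (j : ℝ)) / (A - (j : ℝ))) ^ n
        ≤ (1 / A) ^ (k - 1) := by
      calc ∏ j ∈ Finset.Icc 1 (k - 1), ((B - (j : ℝ)) / (A - (j : ℝ))) ^ n
          ≤ ∏ _j ∈ Finset.Icc 1 (k - 1), (B / (A - B + 1)) ^ n := by
            apply Finset.prod_le_prod
            · intro j hj
              obtain ⟨h1j, hjB⟩ := hjfacts j hj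
              apply pow_nonneg
              apply div_nonneg <;> linarith
            · intro j hj
              obtain ⟨h1j, hjB⟩ := hjfacts j hj
              apply pow_le_pow_left₀
              · apply div_nonneg <;> linarith
              · rw [div_le_div_iff₀ (by linarith) hrpos]
                nlinarith
        _ = ((B / (A - B + 1)) ^ n) ^ (k - 1) := by
            rw [Finset.prod_const, Nat.card_Icc, Nat.add_sub_cancel]
        _ ≤ (1 / A) ^ (k - 1) := pow_le_pow_left₀ hrn0 hrn _
    have hchoose : (k:ℝ) * (a'.choose k : ℝ) ≤ A ^ k / ((k-1).factorial : ℕ) := by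
      have h1 : k.factorial * a'.choose k ≤ a' ^ k := by
        rw [← Nat.descFactorial_eq_factorial_mul_choose]
        exact Nat.descFactorial_le_pow _ _
      have h1' : ((k.factorial : ℕ):ℝ) * (a'.choose k : ℝ) ≤ A ^ k := by
        rw [hA]; exact_mod_cast h1
      have hfk : ((k.factorial : ℕ) : ℝ) = (k:ℝ) * ((k-1).factorial : ℕ) := by
        have : k.factorial = k * (k-1).factorial := by
          conv_lhs => rw [show k = (k-1) + 1 by omega]
          rw [Nat.factorial_succ]
          congr 2
          omega
        exact_mod_cast this
      rw [hfk] at h1'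
      rw [le_div_iff₀ (by positivity : (0:ℝ) < (((k-1).factorial : ℕ):ℝ))]
      nlinarith [h1']
    have hf0 : (0:ℝ) < (((k-1).factorial : ℕ):ℝ) := by positivity
    calc (k : ℝ) * (a'.choose k : ℝ) *
          ∏ j ∈ Finset.Icc 1 (k - 1), ((B - (j : ℝ)) / (A - (j : ℝ))) ^ n
        ≤ (A ^ k / ((k-1).factorial : ℕ)) * (1 / A) ^ (k - 1) := by
          apply mul_le_mul hchoose hprod
          · apply Finset.prod_nonneg
            intro j hj
            obtain ⟨h1j, hjB⟩ := hjfacts j hj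
            apply pow_nonneg
            apply div_nonneg <;> linarith
          · positivity
      _ = A / ((k-1).factorial : ℕ) := by
          have hAk : A ^ k = A * A ^ (k - 1) := by
            conv_lhs => rw [show k = (k-1) + 1 by omega]
            rw [pow_succ]; ring
          rw [hAk]
          field_simp
          ring
          rw [← mul_pow, mul_inv_cancel₀ hApos.ne', one_pow]
  calc ∑ k ∈ Finset.Icc 1 b, (k : ℝ) * (a'.choose k : ℝ) *
        ∏ j ∈ Finset.Icc 1 (k - 1), ((B - (j : ℝ)) / (A - (j : ℝ))) ^ n
      ≤ ∑ k ∈ Finset.Icc 1 b, A / ((k-1).factorial : ℕ) := Finset.sum_le_sum hterm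
    _ = ∑ m ∈ Finset.range b, A / (m.factorial : ℕ) := by
        rw [show Finset.Icc 1 b = Finset.Ico 1 (b+1) from by rw [Finset.Ico_add_one_right_eq_Icc],
          Finset.sum_Ico_eq_sum_range]
        apply Finset.sum_congr (by norm_num)
        intro m _
        norm_num
    _ = (∑ m ∈ Finset.range b, (1:ℝ) ^ m / (m.factorial : ℕ)) * A := by
        rw [Finset.sum_mul]
        apply Finset.sum_congr rfl
        intro m _
        rw [one_pow]
        ring
    _ ≤ Real.exp 1 * A := by
        apply mul_le_mul_of_nonneg_right _ (le_of_lt hApos)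
        exact Real.sum_le_exp_of_nonneg (by norm_num) b
end
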